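/- Suppose A ∈ ℝ^{m×n} satisfies Aᵀ ŷ = 0 for some ŷ > 0 componentwise. Then H₀(A) ≤ sup over v ∈ Aᵀ(ℝ^m) with ‖v‖* ≤ 1 of the minimum of ‖y‖* over y ∈ ℝ^m₊ with Aᵀ y = v. -/

import Mathlib

/-- The dual norm of a (semi)norm `ν` on `Fin k → ℝ` with respect to the
canonical inner product: `‖v‖* = sup_{ν x ≤ 1} ⟪v, x⟫`. -/
noncomputable def dualNorm {k : ℕ} (ν : Seminorm ℝ (Fin k → ℝ)) (v : Fin k → ℝ) : ℝ :=
  sSup {r | ∃ x : Fin k → ℝ, ν x ≤ 1 ∧ r = ∑ i, v i * x i}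

lemma sn_sum_le {k : ℕ} {ι : Type*} (ν : Seminorm ℝ (Fin k → ℝ)) (s : Finset ι)
    (f : ι → (Fin k → ℝ)) : ν (∑ i ∈ s, f i) ≤ ∑ i ∈ s, ν (f i) := by
  classical
  induction s using Finset.induction with
  | empty => simp
  | insert _ _ h ih =>
    rw [Finset.sum_insert h, Finset.sum_insert h]
    exact (map_add_le_add ν _ _).trans (by linarith)

lemma sn_le {k : ℕ} (ν : Seminorm ℝ (Fin k → ℝ)) (x : Fin k → ℝ) :
    ν x ≤ (∑ i, ν (Pi.single i 1)) * ‖x‖ := by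
  have h1 : x = ∑ i, (x i) • (Pi.single i 1 : Fin k → ℝ) := by
    funext j; simp [Pi.single_apply, Finset.sum_apply]
  calc ν x = ν (∑ i, (x i) • (Pi.single i 1 : Fin k → ℝ)) := by rw [← h1]
    _ ≤ ∑ i, ν ((x i) • (Pi.single i 1 : Fin k → ℝ)) := sn_sum_le ν _ _
    _ = ∑ i, |x i| * ν (Pi.single i 1 : Fin k → ℝ) := by
        refine Finset.sum_congr rfl fun i _ => ?_
        rw [map_smul_eq_mul]; rfl
    _ ≤ ∑ i, ‖x‖ * ν (Pi.single i 1) := by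
        refine Finset.sum_le_sum fun i _ => ?_
        exact mul_le_mul_of_nonneg_right (by simpa using norm_le_pi_norm x i) (apply_nonneg _ _)
    _ = (∑ i, ν (Pi.single i 1)) * ‖x‖ := by rw [Finset.sum_mul]; exact Finset.sum_congr rfl fun i _ => mul_comm _ _

lemma sn_continuous {k : ℕ} (ν : Seminorm ℝ (Fin k → ℝ)) : Continuous ν := by
  set C := ∑ i, ν (Pi.single i (1:ℝ)) with hC
  have hC0 : 0 ≤ C := Finset.sum_nonneg fun i _ => apply_nonneg _ _
  have : LipschitzWith (Real.toNNReal C) ν := by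
    apply LipschitzWith.of_dist_le_mul
    intro x y
    rw [Real.dist_eq, dist_eq_norm]
    have h1 : ν x - ν y ≤ ν (x - y) := by
      have := map_add_le_add ν (x - y) y; simpa using this
    have h2 : ν y - ν x ≤ ν (x - y) := by
      have := map_add_le_add ν (y - x) x
      have h3 : ν (y - x) = ν (x - y) := by
        rw [← neg_sub, map_neg_eq_map]
      simp [h3] at this; linarith
    have h4 : ν (x - y) ≤ C * ‖x - y‖ := sn_le ν _
    rw [abs_le]
    constructor
    · simp only [Real.coe_toNNReal _ hC0]; linarith
    · simp only [Real.coe_toNNReal _ hC0]; linarith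
  exact this.continuous

lemma sn_lower {k : ℕ} (ν : Seminorm ℝ (Fin k → ℝ)) (hν : ∀ x, ν x = 0 → x = 0) :
    ∃ ε : ℝ, 0 < ε ∧ ∀ x, ε * ‖x‖ ≤ ν x := by
  rcases Nat.eq_zero_or_pos k with hk | hk
  · refine ⟨1, one_pos, fun x => ?_⟩
    subst hk
    have : x = 0 := funext fun i => absurd i.2 (by omega)
    rw [this, map_zero, norm_zero, mul_zero]
  · have hsne : (Metric.sphere (0 : Fin k → ℝ) 1).Nonempty := by
      refine ⟨Pi.single ⟨0, hk⟩ 1, ?_⟩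
      simp only [Metric.mem_sphere, dist_zero_right]
      rw [Pi.norm_single]; norm_num
    obtain ⟨x₀, hx₀mem, hx₀min'⟩ := (isCompact_sphere (0 : Fin k → ℝ) 1).exists_isMinOn
      hsne (sn_continuous ν).continuousOn
    have hx₀min : ∀ y ∈ Metric.sphere (0 : Fin k → ℝ) 1, ν x₀ ≤ ν y := fun y hy => hx₀min' hy
    have hx₀ : ‖x₀‖ = 1 := by simpa [dist_zero_right] using hx₀mem
    have hx₀ne : x₀ ≠ 0 := by intro h; rw [h] at hx₀; simp at hx₀
    have hε : 0 < ν x₀ := by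
      rcases lt_or_eq_of_le (apply_nonneg ν x₀) with h | h
      · exact h
      · exact absurd (hν x₀ h.symm) hx₀ne
    refine ⟨ν x₀, hε, fun x => ?_⟩
    rcases eq_or_ne x 0 with rfl | hx
    · simp
    · have hxn : 0 < ‖x‖ := norm_pos_iff.2 hx
      have hmem : ‖x‖⁻¹ • x ∈ Metric.sphere (0 : Fin k → ℝ) 1 := by
        simp [dist_zero_right, norm_smul, abs_of_pos (inv_pos.2 hxn), inv_mul_cancel₀ hxn.ne']
      have := hx₀min _ hmem
      have h2 : ν (‖x‖⁻¹ • x) = ‖x‖⁻¹ * ν x := by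
        rw [map_smul_eq_mul]; simp [abs_of_pos (inv_pos.2 hxn)]
      rw [h2] at this
      calc ν x₀ * ‖x‖ ≤ (‖x‖⁻¹ * ν x) * ‖x‖ := by nlinarith
        _ = ν x := by field_simp

lemma pair_crude {k : ℕ} (ν : Seminorm ℝ (Fin k → ℝ)) {ε : ℝ} (hε : 0 < ε)
    (hlow : ∀ x, ε * ‖x‖ ≤ ν x) (v x : Fin k → ℝ) (hx : ν x ≤ 1) :
    ∑ i, v i * x i ≤ (∑ i, |v i|) / ε := by
  have hxb : ∀ i, |x i| ≤ 1/ε := by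
    intro i
    have h1 : |x i| ≤ ‖x‖ := by simpa using norm_le_pi_norm x i
    have h2 : ε * ‖x‖ ≤ ν x := hlow x
    rw [le_div_iff₀ hε]
    nlinarith [abs_nonneg (x i), norm_nonneg x]
  calc ∑ i, v i * x i ≤ ∑ i, |v i| * (1/ε) := by
        refine Finset.sum_le_sum fun i _ => ?_
        calc v i * x i ≤ |v i * x i| := le_abs_self _
          _ = |v i| * |x i| := abs_mul _ _
          _ ≤ |v i| * (1/ε) := mul_le_mul_of_nonneg_left (hxb i) (abs_nonneg _)
    _ = (∑ i, |v i|) / ε := by rw [← Finset.sum_mul]; ring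

lemma dual_bddAbove {k : ℕ} (ν : Seminorm ℝ (Fin k → ℝ)) {ε : ℝ} (hε : 0 < ε)
    (hlow : ∀ x, ε * ‖x‖ ≤ ν x) (v : Fin k → ℝ) :
    BddAbove {r | ∃ x : Fin k → ℝ, ν x ≤ 1 ∧ r = ∑ i, v i * x i} := by
  refine ⟨(∑ i, |v i|) / ε, ?_⟩
  rintro r ⟨x, hx, rfl⟩
  exact pair_crude ν hε hlow v x hx

lemma dual_mem_zero {k : ℕ} (ν : Seminorm ℝ (Fin k → ℝ)) (v : Fin k → ℝ) :
    (0:ℝ) ∈ {r | ∃ x : Fin k → ℝ, ν x ≤ 1 ∧ r = ∑ i, v i * x i} :=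
  ⟨0, by simp, by simp⟩

lemma dualNorm_nonneg {k : ℕ} (ν : Seminorm ℝ (Fin k → ℝ)) {ε : ℝ} (hε : 0 < ε)
    (hlow : ∀ x, ε * ‖x‖ ≤ ν x) (v : Fin k → ℝ) : 0 ≤ dualNorm ν v :=
  le_csSup (dual_bddAbove ν hε hlow v) (dual_mem_zero ν v)

lemma le_dualNorm {k : ℕ} (ν : Seminorm ℝ (Fin k → ℝ)) {ε : ℝ} (hε : 0 < ε)
    (hlow : ∀ x, ε * ‖x‖ ≤ ν x) (v x : Fin k → ℝ) (hx : ν x ≤ 1) :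
    ∑ i, v i * x i ≤ dualNorm ν v :=
  le_csSup (dual_bddAbove ν hε hlow v) ⟨x, hx, rfl⟩

lemma dualNorm_le {k : ℕ} (ν : Seminorm ℝ (Fin k → ℝ)) (v : Fin k → ℝ) {B : ℝ}
    (h : ∀ x, ν x ≤ 1 → ∑ i, v i * x i ≤ B) : dualNorm ν v ≤ B := by
  refine csSup_le ⟨0, dual_mem_zero ν v⟩ ?_
  rintro r ⟨x, hx, rfl⟩
  exact h x hx

lemma dualNorm_le_crude {k : ℕ} (ν : Seminorm ℝ (Fin k → ℝ)) {ε : ℝ} (hε : 0 < ε)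
    (hlow : ∀ x, ε * ‖x‖ ≤ ν x) (v : Fin k → ℝ) :
    dualNorm ν v ≤ (∑ i, |v i|) / ε :=
  dualNorm_le ν v fun x hx => pair_crude ν hε hlow v x hx

lemma pairing {k : ℕ} (ν : Seminorm ℝ (Fin k → ℝ)) {ε : ℝ} (hε : 0 < ε)
    (hlow : ∀ x, ε * ‖x‖ ≤ ν x) (v x : Fin k → ℝ) :
    ∑ i, v i * x i ≤ dualNorm ν v * ν x := by
  rcases eq_or_lt_of_le (apply_nonneg ν x) with h | h
  · have hx0 : x = 0 := by
      have := hlow x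
      rw [← h] at this
      have hn : ‖x‖ = 0 := le_antisymm (by nlinarith [norm_nonneg x]) (norm_nonneg x)
      exact norm_eq_zero.mp hn
    simp [hx0, ← h]
  · set t := ν x with ht
    have h1 : ν (t⁻¹ • x) ≤ 1 := by
      rw [map_smul_eq_mul, Real.norm_eq_abs, abs_of_pos (inv_pos.2 h), ← ht,
        inv_mul_cancel₀ h.ne']
    have h2 := le_dualNorm ν hε hlow v _ h1
    have h3 : ∑ i, v i * (t⁻¹ • x) i = t⁻¹ * ∑ i, v i * x i := by
      rw [Finset.mul_sum]
      exact Finset.sum_congr rfl fun i _ => by simp [Pi.smul_apply]; ring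
    rw [h3] at h2
    calc ∑ i, v i * x i = t * (t⁻¹ * ∑ i, v i * x i) := by field_simp
      _ ≤ t * dualNorm ν v := mul_le_mul_of_nonneg_left h2 h.le
      _ = dualNorm ν v * t := mul_comm _ _

lemma exists_section {m n : ℕ} (A : Matrix (Fin m) (Fin n) ℝ) :
    ∃ (L : (Fin n → ℝ) →ₗ[ℝ] (Fin m → ℝ)) (C : ℝ), 0 ≤ C ∧
      (∀ v : Fin n → ℝ, (∃ w, A.transpose.mulVec w = v) → A.transpose.mulVec (L v) = v) ∧
      (∀ v, ‖L v‖ ≤ C * ‖v‖) := by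
  classical
  set T : (Fin m → ℝ) →ₗ[ℝ] (Fin n → ℝ) := A.transpose.mulVecLin with hT
  obtain ⟨q, hq⟩ := Submodule.exists_isCompl (LinearMap.ker T)
  obtain ⟨q', hq'⟩ := Submodule.exists_isCompl (LinearMap.range T)
  let e₁ := Submodule.quotientEquivOfIsCompl (LinearMap.ker T) q hq
  let e₂ := T.quotKerEquivRange
  let L0 : LinearMap.range T →ₗ[ℝ] (Fin m → ℝ) :=
    q.subtype ∘ₗ e₁.toLinearMap ∘ₗ e₂.symm.toLinearMap
  have hL0 : ∀ x : LinearMap.range T, T (L0 x) = x := by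
    intro x
    have h1 : (Submodule.Quotient.mk (L0 x) : (Fin m → ℝ) ⧸ LinearMap.ker T) = e₂.symm x :=
      Submodule.mk_quotientEquivOfIsCompl_apply hq (e₂.symm x)
    have h2 : (e₂ (Submodule.Quotient.mk (L0 x)) : Fin n → ℝ) = T (L0 x) :=
      T.quotKerEquivRange_apply_mk (L0 x)
    rw [h1, e₂.apply_symm_apply] at h2
    exact h2.symm
  let π := (LinearMap.range T).linearProjOfIsCompl q' hq'
  let L : (Fin n → ℝ) →ₗ[ℝ] (Fin m → ℝ) := L0 ∘ₗ π
  let Lc := LinearMap.toContinuousLinearMap L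
  refine ⟨L, ‖Lc‖, norm_nonneg _, ?_, fun v => Lc.le_opNorm v⟩
  rintro v ⟨w, hw⟩
  have hv : v ∈ LinearMap.range T := ⟨w, hw⟩
  have hπ : π v = ⟨v, hv⟩ := Submodule.linearProjOfIsCompl_apply_left hq' ⟨v, hv⟩
  have : T (L v) = v := by
    show T (L0 (π v)) = v
    rw [hπ, hL0]
  exact this

lemma mk_nonneg {m n : ℕ} (A : Matrix (Fin m) (Fin n) ℝ) (yhat : Fin m → ℝ)
    (hyhatpos : ∀ i, 0 < yhat i) (hyhat : A.transpose.mulVec yhat = 0) (w : Fin m → ℝ) :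
    ∃ y : Fin m → ℝ, (∀ i, 0 ≤ y i) ∧ A.transpose.mulVec y = A.transpose.mulVec w ∧
      ∑ i, |y i| ≤ (∑ i, |w i|) * (1 + (∑ j, (yhat j)⁻¹) * (∑ i, yhat i)) := by
  set t := ∑ j, |w j| * (yhat j)⁻¹ with hts
  have ht0 : 0 ≤ t := Finset.sum_nonneg fun j _ =>
    mul_nonneg (abs_nonneg _) (inv_pos.2 (hyhatpos j)).le
  have htge : ∀ i, |w i| * (yhat i)⁻¹ ≤ t := fun i =>
    Finset.single_le_sum (f := fun j => |w j| * (yhat j)⁻¹)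
      (fun j _ => mul_nonneg (abs_nonneg _) (inv_pos.2 (hyhatpos j)).le) (Finset.mem_univ i)
  refine ⟨w + t • yhat, ?_, ?_, ?_⟩
  · intro i
    have h1 : |w i| ≤ t * yhat i := by
      have := mul_le_mul_of_nonneg_right (htge i) (hyhatpos i).le
      rwa [mul_assoc, inv_mul_cancel₀ (hyhatpos i).ne', mul_one] at this
    have := neg_abs_le (w i)
    simp only [Pi.add_apply, Pi.smul_apply, smul_eq_mul]
    linarith
  · rw [Matrix.mulVec_add, Matrix.mulVec_smul, hyhat]
    simp
  · have hSw : ∀ i, |w i| ≤ ∑ j, |w j| := fun i =>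
      Finset.single_le_sum (fun j _ => abs_nonneg (w j)) (Finset.mem_univ i)
    have hbd : ∀ i, |(w + t • yhat) i| ≤ |w i| + t * yhat i := by
      intro i
      simp only [Pi.add_apply, Pi.smul_apply, smul_eq_mul]
      calc |w i + t * yhat i| ≤ |w i| + |t * yhat i| := abs_add_le _ _
        _ = |w i| + t * yhat i := by
            rw [abs_of_nonneg (mul_nonneg ht0 (hyhatpos i).le)]
    have htle : t ≤ (∑ j, |w j|) * ∑ j, (yhat j)⁻¹ := by
      rw [hts, Finset.mul_sum]
      refine Finset.sum_le_sum fun j _ => ?_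
      exact mul_le_mul_of_nonneg_right (hSw j) (inv_pos.2 (hyhatpos j)).le
    calc ∑ i, |(w + t • yhat) i| ≤ ∑ i, (|w i| + t * yhat i) :=
          Finset.sum_le_sum fun i _ => hbd i
      _ = (∑ i, |w i|) + t * ∑ i, yhat i := by rw [Finset.sum_add_distrib, Finset.mul_sum]
      _ ≤ (∑ i, |w i|) * (1 + (∑ j, (yhat j)⁻¹) * (∑ i, yhat i)) := by
          have hy0 : 0 ≤ ∑ i, yhat i := Finset.sum_nonneg fun i _ => (hyhatpos i).le
          nlinarith [mul_le_mul_of_nonneg_right htle hy0]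

open Matrix in
lemma ortho_range {m n : ℕ} (A : Matrix (Fin m) (Fin n) ℝ) (v : Fin n → ℝ)
    (h : ∀ x : Fin n → ℝ, A.mulVec x = 0 → ∑ i, v i * x i = 0) :
    ∃ w : Fin m → ℝ, A.transpose.mulVec w = v := by
  let T := Matrix.toEuclideanLin A.transpose
  let R : Submodule ℝ (EuclideanSpace ℝ (Fin n)) := LinearMap.range T
  have hRR : Rᗮᗮ = R := Submodule.orthogonal_orthogonal R
  have hv : (WithLp.equiv 2 (Fin n → ℝ)).symm v ∈ Rᗮᗮ := by
    rw [Submodule.mem_orthogonal]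
    intro z hz
    have hAz : A.mulVec (WithLp.equiv 2 (Fin n → ℝ) z) = 0 := by
      funext j
      have := hz (T ((WithLp.equiv 2 _).symm (Pi.single j 1))) ⟨_, rfl⟩
      simp only [T, Matrix.toEuclideanLin_apply, PiLp.inner_apply, RCLike.inner_apply,
        conj_trivial, WithLp.equiv_symm_apply, Equiv.apply_symm_apply] at this
      show (A *ᵥ (WithLp.equiv 2 (Fin n → ℝ)) z) j = 0
      rw [← this]
      simp [Matrix.mulVec, dotProduct, Matrix.transpose_apply, Pi.single_apply,
        mul_comm]
    have h2 := h (WithLp.equiv 2 (Fin n → ℝ) z) hAz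
    simp only [PiLp.inner_apply, RCLike.inner_apply, conj_trivial]
    rw [← h2]
    exact Finset.sum_congr rfl fun i _ => rfl
  rw [hRR] at hv
  obtain ⟨w, hw⟩ := hv
  exact ⟨(WithLp.equiv 2 _) w, by
    have := congrArg (WithLp.equiv 2 (Fin n → ℝ)) hw
    simpa [T, Matrix.ofLp_toEuclideanLin_apply] using this⟩


open scoped Matrix in
/-- Proposition 2 (pointwise form): if `Aᵀ yhat = 0` for some `yhat > 0`, then
`H₀(A) ≤ sup { inf {‖y‖* : y ≥ 0, Aᵀ y = v} : v ∈ Aᵀ(ℝᵐ), ‖v‖* ≤ 1 }`.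
Norms are definite seminorms `nn`, `nm`, with `nm` componentwise compatible. -/
theorem stmt6 {m n : ℕ} (A : Matrix (Fin m) (Fin n) ℝ)
    (nn : Seminorm ℝ (Fin n → ℝ)) (nm : Seminorm ℝ (Fin m → ℝ))
    (hnn : ∀ x, nn x = 0 → x = 0) (hnm : ∀ y, nm y = 0 → y = 0)
    (hcompat : ∀ y z : Fin m → ℝ, (∀ i, |y i| ≤ |z i|) → nm y ≤ nm z)
    (yhat : Fin m → ℝ) (hyhatpos : ∀ i, 0 < yhat i)
    (hyhat : A.transpose.mulVec yhat = 0) :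
    ∀ u : Fin n → ℝ, (¬ ∀ i, A.mulVec u i ≤ 0) →
      sInf {r | ∃ x, (∀ i, A.mulVec x i ≤ 0) ∧ r = nn (u - x)} ≤
        (sSup {r | ∃ v : Fin n → ℝ, (∃ w, A.transpose.mulVec w = v) ∧
            dualNorm nn v ≤ 1 ∧
            r = sInf {s | ∃ y : Fin m → ℝ, (∀ i, 0 ≤ y i) ∧
              A.transpose.mulVec y = v ∧ s = dualNorm nm y}}) *
          nm (fun i => max (A.mulVec u i) 0) := by
  intro u hu
  classical
  set z : Fin m → ℝ := fun i => max (A.mulVec u i) 0 with hzdef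
  have hc0 : 0 < nm z := by
    rcases (apply_nonneg nm z).lt_or_eq with h | h
    · exact h
    · exfalso
      apply hu
      intro i
      have hz0 : z = 0 := hnm z h.symm
      have := congrFun hz0 i
      simp only [hzdef, Pi.zero_apply] at this
      exact max_eq_right_iff.mp this
  obtain ⟨εn, hεn, hlown⟩ := sn_lower nn hnn
  obtain ⟨εm, hεm, hlowm⟩ := sn_lower nm hnm
  -- the cone is the kernel
  have hker : ∀ x : Fin n → ℝ, (∀ i, A.mulVec x i ≤ 0) → A.mulVec x = 0 := by
    intro x hx
    have hvm : yhat ᵥ* A = 0 := by rw [← Matrix.mulVec_transpose, hyhat]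
    have hsum : ∑ j, yhat j * A.mulVec x j = 0 := by
      have h1 : yhat ⬝ᵥ (A.mulVec x) = (yhat ᵥ* A) ⬝ᵥ x := Matrix.dotProduct_mulVec _ _ _
      rw [hvm] at h1
      simpa [dotProduct] using h1
    have hterm : ∀ j ∈ Finset.univ, 0 ≤ -(yhat j * A.mulVec x j) := fun j _ =>
      neg_nonneg.2 (mul_nonpos_of_nonneg_of_nonpos (hyhatpos j).le (hx j))
    have hzero : ∀ j ∈ Finset.univ, -(yhat j * A.mulVec x j) = 0 := by
      rw [← Finset.sum_eq_zero_iff_of_nonneg hterm]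
      rw [Finset.sum_neg_distrib, hsum, neg_zero]
    funext j
    have := hzero j (Finset.mem_univ j)
    have h2 : yhat j * A.mulVec x j = 0 := by linarith
    simp only [Pi.zero_apply]
    rcases mul_eq_zero.mp h2 with h | h
    · exact absurd h (hyhatpos j).ne'
    · exact h
  -- distance set
  have hDne : nn u ∈ {r | ∃ x, (∀ i, A.mulVec x i ≤ 0) ∧ r = nn (u - x)} :=
    ⟨0, fun i => by simp, by simp⟩
  have hDbb : BddBelow {r | ∃ x, (∀ i, A.mulVec x i ≤ 0) ∧ r = nn (u - x)} :=
    ⟨0, by rintro r ⟨x, _, rfl⟩; exact apply_nonneg _ _⟩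
  set d := sInf {r | ∃ x, (∀ i, A.mulVec x i ≤ 0) ∧ r = nn (u - x)} with hd
  have hd0 : 0 ≤ d := le_csInf ⟨_, hDne⟩ (by rintro r ⟨x, _, rfl⟩; exact apply_nonneg _ _)
  have hdle : ∀ x : Fin n → ℝ, A.mulVec x = 0 → d ≤ nn (u - x) := fun x hx =>
    csInf_le hDbb ⟨x, fun i => by rw [hx]; exact le_rfl, rfl⟩
  -- u is not in the kernel
  have hAu0 : A.mulVec u ≠ 0 := fun h => hu fun i => by rw [h]; exact le_rfl
  have hexj : ∃ j, A.mulVec u j ≠ 0 := by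
    by_contra h
    push_neg at h
    exact hAu0 (funext h)
  obtain ⟨j, hj⟩ := hexj
  -- separating vector p
  set p := A.transpose.mulVec (Pi.single j ((A.mulVec u j)⁻¹)) with hp
  have hdot : ∀ x : Fin n → ℝ, ∑ i, p i * x i = (A.mulVec u j)⁻¹ * A.mulVec x j := by
    intro x
    have h1 : p ⬝ᵥ x = Pi.single j ((A.mulVec u j)⁻¹) ⬝ᵥ (A.mulVec x) := by
      rw [hp, Matrix.mulVec_transpose, ← Matrix.dotProduct_mulVec]
    simpa [dotProduct, Pi.single_apply] using h1
  have hpker : ∀ x : Fin n → ℝ, A.mulVec x = 0 → ∑ i, p i * x i = 0 := by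
    intro x hx; rw [hdot, hx]; simp
  have hpu : ∑ i, p i * u i = 1 := by rw [hdot]; exact inv_mul_cancel₀ hj
  -- the linear functional
  set φ : (Fin n → ℝ) →ₗ[ℝ] ℝ := ∑ i, p i • LinearMap.proj i with hφdef
  have hφ : ∀ x, φ x = ∑ i, p i * x i := by
    intro x
    simp [hφdef, LinearMap.sum_apply, LinearMap.proj_apply, smul_eq_mul]
  set g0 : (Fin n → ℝ) →ₗ[ℝ] ℝ := d • φ with hg0def
  set K := LinearMap.ker A.mulVecLin with hKdef
  set W := K ⊔ (Submodule.span ℝ {u}) with hWdef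
  have hmemK : ∀ x : Fin n → ℝ, A.mulVec x = 0 → x ∈ K := by
    intro x hx
    rw [hKdef, LinearMap.mem_ker, Matrix.mulVecLin_apply]
    exact hx
  have hmemK' : ∀ x : Fin n → ℝ, x ∈ K → A.mulVec x = 0 := by
    intro x hx
    rw [hKdef, LinearMap.mem_ker, Matrix.mulVecLin_apply] at hx
    exact hx
  have hbound : ∀ x : (g0.toPMap W).domain, (g0.toPMap W) x ≤ nn x := by
    rintro ⟨x, hx⟩
    change g0 x ≤ nn x
    obtain ⟨k, hk, z', hz', rfl⟩ := Submodule.mem_sup.mp hx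
    obtain ⟨t, rfl⟩ := Submodule.mem_span_singleton.mp hz'
    have hφk : φ k = 0 := by rw [hφ]; exact hpker k (hmemK' k hk)
    have hg0v : g0 (k + t • u) = d * t := by
      rw [hg0def]
      simp only [LinearMap.smul_apply, map_add, map_smul, hφk, smul_eq_mul]
      rw [hφ u, hpu]
      ring
    rw [hg0v]
    rcases lt_trichotomy t 0 with ht | ht | ht
    · have : d * t ≤ 0 := mul_nonpos_of_nonneg_of_nonpos hd0 ht.le
      exact this.trans (apply_nonneg _ _)
    · subst ht; rw [mul_zero]; exact apply_nonneg _ _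
    · have hker' : A.mulVec ((-t⁻¹) • k) = 0 := by
        rw [Matrix.mulVec_smul, hmemK' k hk, smul_zero]
      have h1 : d ≤ nn (u - (-t⁻¹) • k) := hdle _ hker'
      have h2 : nn (k + t • u) = t * nn (u - (-t⁻¹) • k) := by
        have hrw : k + t • u = t • (u - (-t⁻¹) • k) := by
          rw [smul_sub, smul_smul]
          field_simp
          module
        rw [hrw, map_smul_eq_mul, Real.norm_eq_abs, abs_of_pos ht]
      rw [h2]
      calc d * t = t * d := mul_comm _ _
        _ ≤ t * nn (u - (-t⁻¹) • k) := mul_le_mul_of_nonneg_left h1 ht.le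
  obtain ⟨g, hgf, hgle⟩ := exists_extension_of_le_sublinear (g0.toPMap W) nn
    (fun c hc x => by rw [map_smul_eq_mul, Real.norm_eq_abs, abs_of_pos hc])
    (fun x y => map_add_le_add nn x y) hbound
  set v' : Fin n → ℝ := fun i => g (Pi.single i 1) with hv'def
  have hgx : ∀ x : Fin n → ℝ, g x = ∑ i, v' i * x i := by
    intro x
    have h1 : x = ∑ i, (x i) • (Pi.single i 1 : Fin n → ℝ) := by
      funext j'; simp [Pi.single_apply, Finset.sum_apply]
    conv_lhs => rw [h1]
    rw [map_sum]
    exact Finset.sum_congr rfl fun i _ => by rw [map_smul, smul_eq_mul, mul_comm]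
  have huW : u ∈ W := Submodule.mem_sup_right (Submodule.mem_span_singleton_self u)
  have hgu : g u = d := by
    have h1 := hgf ⟨u, huW⟩
    change g u = g0 u at h1
    rw [h1, hg0def]
    simp only [LinearMap.smul_apply, smul_eq_mul]
    rw [hφ u, hpu, mul_one]
  have hvker : ∀ x : Fin n → ℝ, A.mulVec x = 0 → ∑ i, v' i * x i = 0 := by
    intro x hx
    rw [← hgx]
    have h1 := hgf ⟨x, Submodule.mem_sup_left (hmemK x hx)⟩
    change g x = g0 x at h1
    rw [h1, hg0def]
    simp only [LinearMap.smul_apply, smul_eq_mul]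
    rw [hφ x, hpker x hx, mul_zero]
  have hvdual : dualNorm nn v' ≤ 1 := dualNorm_le nn v' fun x hx => by
    rw [← hgx]; exact (hgle x).trans hx
  obtain ⟨w, hw⟩ := ortho_range A v' hvker
  have hdu : ∑ i, v' i * u i = d := by rw [← hgx]; exact hgu
  -- key pairing inequality
  have hkey : ∀ y : Fin m → ℝ, (∀ i, 0 ≤ y i) → A.transpose.mulVec y = v' →
      d ≤ dualNorm nm y * nm z := by
    intro y hy hAy
    have h1 : ∑ i, v' i * u i = ∑ j', y j' * A.mulVec u j' := by
      rw [← hAy]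
      have h0 : (A.transpose.mulVec y) ⬝ᵥ u = y ⬝ᵥ (A.mulVec u) := by
        rw [Matrix.mulVec_transpose, ← Matrix.dotProduct_mulVec]
      simpa [dotProduct] using h0
    have h2 : ∑ j', y j' * A.mulVec u j' ≤ ∑ j', y j' * z j' :=
      Finset.sum_le_sum fun j' _ =>
        mul_le_mul_of_nonneg_left (le_max_left _ _) (hy j')
    have h3 : ∑ j', y j' * z j' ≤ dualNorm nm y * nm z := pairing nm hεm hlowm y z
    rw [← hdu, h1]
    linarith
  -- the inner infimum for v'
  obtain ⟨y₀, hy₀n, hy₀e, hy₀b⟩ := mk_nonneg A yhat hyhatpos hyhat w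
  have hy₀e' : A.transpose.mulVec y₀ = v' := hy₀e.trans hw
  have hSne : (dualNorm nm y₀) ∈ {s | ∃ y : Fin m → ℝ, (∀ i, 0 ≤ y i) ∧
      A.transpose.mulVec y = v' ∧ s = dualNorm nm y} := ⟨y₀, hy₀n, hy₀e', rfl⟩
  have hrd : d ≤ sInf {s | ∃ y : Fin m → ℝ, (∀ i, 0 ≤ y i) ∧
      A.transpose.mulVec y = v' ∧ s = dualNorm nm y} * nm z := by
    have h1 : d / nm z ≤ sInf {s | ∃ y : Fin m → ℝ, (∀ i, 0 ≤ y i) ∧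
        A.transpose.mulVec y = v' ∧ s = dualNorm nm y} := by
      refine le_csInf ⟨_, hSne⟩ ?_
      rintro s ⟨y, hy, hAy, rfl⟩
      rw [div_le_iff₀ hc0]
      exact hkey y hy hAy
    calc d = (d / nm z) * nm z := by field_simp
      _ ≤ _ := mul_le_mul_of_nonneg_right h1 hc0.le
  -- bounded above
  obtain ⟨L, CL, hCL0, hLsec, hLbound⟩ := exists_section A
  set Cn := ∑ j' : Fin n, nn (Pi.single j' 1 : Fin n → ℝ) with hCn
  have hCn0 : 0 ≤ Cn := Finset.sum_nonneg fun _ _ => apply_nonneg _ _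
  set Q := 1 + (∑ j' : Fin m, (yhat j')⁻¹) * (∑ i, yhat i) with hQ
  have hQ0 : 0 ≤ Q := by
    have h1 : 0 ≤ ∑ j' : Fin m, (yhat j')⁻¹ :=
      Finset.sum_nonneg fun j' _ => (inv_pos.2 (hyhatpos j')).le
    have h2 : 0 ≤ ∑ i, yhat i := Finset.sum_nonneg fun i _ => (hyhatpos i).le
    rw [hQ]
    nlinarith [mul_nonneg h1 h2]
  set B := ((m : ℝ) * (CL * Cn) * Q) / εm with hB
  have hbdd : BddAbove {r | ∃ v : Fin n → ℝ, (∃ w, A.transpose.mulVec w = v) ∧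
      dualNorm nn v ≤ 1 ∧
      r = sInf {s | ∃ y : Fin m → ℝ, (∀ i, 0 ≤ y i) ∧
        A.transpose.mulVec y = v ∧ s = dualNorm nm y}} := by
    refine ⟨B, ?_⟩
    rintro r ⟨v, ⟨w0, hw0⟩, hvd, rfl⟩
    have hcoord : ∀ j0, |v j0| ≤ nn (Pi.single j0 1 : Fin n → ℝ) := by
      intro j0
      set e : Fin n → ℝ := Pi.single j0 1 with he
      have hene : nn e ≠ 0 := fun h => by
        have := congrFun (hnn e h) j0
        rw [he] at this
        simp at this
      have hepos : 0 < nn e := lt_of_le_of_ne (apply_nonneg _ _) (Ne.symm hene)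
      set sg : ℝ := if 0 ≤ v j0 then 1 else -1 with hsg
      have hsgabs : |sg| = 1 := by rw [hsg]; split_ifs <;> norm_num
      set x := ((nn e)⁻¹ * sg) • e with hx
      have hnx : nn x ≤ 1 := by
        rw [hx, map_smul_eq_mul, Real.norm_eq_abs, abs_mul, hsgabs,
          abs_of_nonneg (inv_pos.2 hepos).le, mul_one, inv_mul_cancel₀ hepos.ne']
      have hsum := le_dualNorm nn hεn hlown v x hnx
      have hval : ∑ i, v i * x i = (nn e)⁻¹ * (sg * v j0) := by
        rw [hx]
        have : ∀ i, v i * (((nn e)⁻¹ * sg) • e) i = ((nn e)⁻¹ * sg) * (v i * e i) := by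
          intro i; simp [Pi.smul_apply, smul_eq_mul]; ring
        rw [Finset.sum_congr rfl fun i _ => this i, ← Finset.mul_sum]
        have he2 : ∑ i, v i * e i = v j0 := by
          rw [he]
          simp [Pi.single_apply]
        rw [he2]; ring
      have hsv : sg * v j0 = |v j0| := by
        rw [hsg]
        split_ifs with h
        · rw [abs_of_nonneg h, one_mul]
        · rw [abs_of_neg (lt_of_not_ge h)]; ring
      rw [hval, hsv] at hsum
      have hle1 : (nn e)⁻¹ * |v j0| ≤ 1 := hsum.trans hvd
      calc |v j0| = nn e * ((nn e)⁻¹ * |v j0|) := by field_simp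
        _ ≤ nn e * 1 := mul_le_mul_of_nonneg_left hle1 hepos.le
        _ = nn e := mul_one _
    have hnv : ‖v‖ ≤ Cn := by
      refine (pi_norm_le_iff_of_nonneg hCn0).mpr fun j0 => ?_
      rw [Real.norm_eq_abs]
      calc |v j0| ≤ nn (Pi.single j0 1 : Fin n → ℝ) := hcoord j0
        _ ≤ Cn := by
          rw [hCn]
          exact Finset.single_le_sum (f := fun i => nn (Pi.single i 1 : Fin n → ℝ))
            (fun i _ => apply_nonneg nn _) (Finset.mem_univ j0)
    have hw1v : A.transpose.mulVec (L v) = v := hLsec v ⟨w0, hw0⟩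
    have hw1n : ‖L v‖ ≤ CL * Cn :=
      (hLbound v).trans (mul_le_mul_of_nonneg_left hnv hCL0)
    obtain ⟨y, hyn, hye, hyb⟩ := mk_nonneg A yhat hyhatpos hyhat (L v)
    have hye' : A.transpose.mulVec y = v := hye.trans hw1v
    have hsumw : ∑ i, |(L v) i| ≤ (m : ℝ) * (CL * Cn) := by
      calc ∑ i, |(L v) i| ≤ ∑ _i : Fin m, ‖L v‖ :=
            Finset.sum_le_sum fun i _ => by simpa using norm_le_pi_norm (L v) i
        _ = (m : ℝ) * ‖L v‖ := by
            rw [Finset.sum_const, Finset.card_univ, Fintype.card_fin, nsmul_eq_mul]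
        _ ≤ (m : ℝ) * (CL * Cn) := mul_le_mul_of_nonneg_left hw1n (Nat.cast_nonneg m)
    have hyb2 : ∑ i, |y i| ≤ (m : ℝ) * (CL * Cn) * Q := by
      refine hyb.trans ?_
      rw [← hQ]
      exact mul_le_mul_of_nonneg_right hsumw hQ0
    have hmemy : dualNorm nm y ∈ {s | ∃ y' : Fin m → ℝ, (∀ i, 0 ≤ y' i) ∧
        A.transpose.mulVec y' = v ∧ s = dualNorm nm y'} := ⟨y, hyn, hye', rfl⟩
    have hbb : BddBelow {s | ∃ y' : Fin m → ℝ, (∀ i, 0 ≤ y' i) ∧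
        A.transpose.mulVec y' = v ∧ s = dualNorm nm y'} :=
      ⟨0, by rintro s ⟨y', _, _, rfl⟩; exact dualNorm_nonneg nm hεm hlowm y'⟩
    refine (csInf_le hbb hmemy).trans ?_
    refine (dualNorm_le_crude nm hεm hlowm y).trans ?_
    rw [hB]
    exact (div_le_div_iff_of_pos_right hεm).mpr hyb2
  have hmem2 : sInf {s | ∃ y : Fin m → ℝ, (∀ i, 0 ≤ y i) ∧
      A.transpose.mulVec y = v' ∧ s = dualNorm nm y} ∈
      {r | ∃ v : Fin n → ℝ, (∃ w, A.transpose.mulVec w = v) ∧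
      dualNorm nn v ≤ 1 ∧
      r = sInf {s | ∃ y : Fin m → ℝ, (∀ i, 0 ≤ y i) ∧
        A.transpose.mulVec y = v ∧ s = dualNorm nm y}} := ⟨v', ⟨w, hw⟩, hvdual, rfl⟩
  have hfin := le_csSup hbdd hmem2
  exact hrd.trans (mul_le_mul_of_nonneg_right hfin hc0.le)
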